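/- Let φ be an Orlicz function such that ∑_{n=n₁}^∞ φ(1/n) < ∞ for some n₁ ∈ ℕ. If φ satisfies the Δ₂-condition at zero, then A_φ = ces_φ, i.e. every x ∈ ces_φ satisfies: for all k > 0 there exists n_k ∈ ℕ with ∑_{n=n_k}^∞ φ((k/n)·∑_{i=1}^{n} |x(i)|) < ∞. -/

import Mathlib

open scoped ENNReal
open Filter

/-- An Orlicz function: `φ : ℝ → [0,∞]` even, convex, left continuous on `ℝ₊`,
continuous at zero, with `φ 0 = 0` and `φ u → ∞` as `u → ∞`. -/
structure OrliczFunction where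
  toFun : ℝ → ℝ≥0∞
  even' : ∀ u : ℝ, toFun (-u) = toFun u
  convex' : ∀ u v t : ℝ, 0 ≤ t → t ≤ 1 →
    toFun (t * u + (1 - t) * v) ≤ ENNReal.ofReal t * toFun u + ENNReal.ofReal (1 - t) * toFun v
  map_zero' : toFun 0 = 0
  leftContinuous' : ∀ t : ℝ, 0 < t → Tendsto toFun (nhdsWithin t (Set.Iio t)) (nhds (toFun t))
  continuousAtZero' : Tendsto toFun (nhds 0) (nhds 0)
  tendsto_top' : Tendsto toFun atTop (nhds ⊤)

/-- The Cesàro mean `σx(n) = (1/n) ∑_{j=1}^n |x j|` (with `0`-based indexing). -/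
noncomputable def cesaroMean (x : ℕ → ℝ) (n : ℕ) : ℝ :=
  (∑ j ∈ Finset.range (n + 1), |x j|) / (n + 1)

/-- The modular `ρ_φ(x) = ∑_i φ(σx(i))`. -/
noncomputable def rho (φ : OrliczFunction) (x : ℕ → ℝ) : ℝ≥0∞ :=
  ∑' n : ℕ, φ.toFun (cesaroMean x n)

/-- The Cesàro–Orlicz sequence space `ces_φ`. -/
def cesOrlicz (φ : OrliczFunction) : Set (ℕ → ℝ) :=
  {x | ∃ lam : ℝ, 0 < lam ∧ rho φ (fun i => lam * x i) < ⊤}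

/-- The Luxemburg norm `‖x‖_φ = inf {λ > 0 : ρ_φ(x/λ) ≤ 1}`. -/
noncomputable def luxNorm (φ : OrliczFunction) (x : ℕ → ℝ) : ℝ :=
  sInf {lam : ℝ | 0 < lam ∧ rho φ (fun i => x i / lam) ≤ 1}

/-- The subspace `A_φ` of `ces_φ`. -/
def Aphi (φ : OrliczFunction) : Set (ℕ → ℝ) :=
  {x | x ∈ cesOrlicz φ ∧ ∀ k : ℝ, 0 < k → ∃ nk : ℕ,
    ∑' n : ℕ, φ.toFun ((k / ((nk + n + 1 : ℕ) : ℝ)) * ∑ i ∈ Finset.range (nk + n + 1), |x i|) < ⊤}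

/-- `∃ n₁, ∑_{n=n₁}^∞ φ(1/n) < ∞`. -/
def TailFinite (φ : OrliczFunction) : Prop :=
  ∃ n₁ : ℕ, ∑' n : ℕ, φ.toFun (((n₁ + n + 1 : ℕ) : ℝ)⁻¹) < ⊤

/-- The `Δ₂`-condition at zero. -/
def Delta2Zero (φ : OrliczFunction) : Prop :=
  ∃ K : ℝ, 0 < K ∧ ∃ a : ℝ, 0 < a ∧ 0 < φ.toFun a ∧
    ∀ u : ℝ, 0 ≤ u → u ≤ a → φ.toFun (2 * u) ≤ ENNReal.ofReal K * φ.toFun u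

/-- `φ` takes only finite values. -/
def FiniteValued (φ : OrliczFunction) : Prop := ∀ u : ℝ, φ.toFun u ≠ ⊤

lemma orlicz_mono (φ : OrliczFunction) {u v : ℝ} (hu : 0 ≤ u) (huv : u ≤ v) :
    φ.toFun u ≤ φ.toFun v := by
  rcases eq_or_lt_of_le (hu.trans huv) with hv | hv
  · have h1 : u = 0 := le_antisymm (huv.trans hv.symm.le) hu
    rw [h1, ← hv]
  · set t := u / v with ht
    have ht0 : 0 ≤ t := div_nonneg hu hv.le
    have ht1 : t ≤ 1 := div_le_one_of_le₀ huv hv.le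
    have hcombo : t * v + (1 - t) * 0 = u := by
      rw [mul_zero, add_zero, ht, div_mul_cancel₀ _ hv.ne']
    have hconv := φ.convex' v 0 t ht0 ht1
    rw [hcombo, φ.map_zero', mul_zero, add_zero] at hconv
    calc φ.toFun u ≤ ENNReal.ofReal t * φ.toFun v := hconv
      _ ≤ 1 * φ.toFun v := by gcongr; exact ENNReal.ofReal_le_one.mpr ht1
      _ = φ.toFun v := one_mul _

lemma orlicz_pow_bound (φ : OrliczFunction) {K a : ℝ} (ha : 0 < a)
    (hq : ∀ u : ℝ, 0 ≤ u → u ≤ a → φ.toFun (2 * u) ≤ ENNReal.ofReal K * φ.toFun u) :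
    ∀ m : ℕ, ∀ u : ℝ, 0 ≤ u → 2 ^ m * u ≤ 2 * a →
      φ.toFun (2 ^ m * u) ≤ (ENNReal.ofReal K) ^ m * φ.toFun u := by
  intro m
  induction m with
  | zero => intro u hu _; simp
  | succ m ih =>
    intro u hu hle
    have h1 : (2:ℝ) ^ (m+1) * u = 2 * (2 ^ m * u) := by ring
    have h2 : 2 ^ m * u ≤ a := by
      rw [pow_succ] at hle; nlinarith
    have h3 : 2 ^ m * u ≤ 2 * a := h2.trans (by linarith)
    have hn : 0 ≤ 2 ^ m * u := by positivity
    calc φ.toFun (2 ^ (m+1) * u) = φ.toFun (2 * (2 ^ m * u)) := by rw [h1]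
      _ ≤ ENNReal.ofReal K * φ.toFun (2 ^ m * u) := hq _ hn h2
      _ ≤ ENNReal.ofReal K * ((ENNReal.ofReal K) ^ m * φ.toFun u) := by
          gcongr; exact ih u hu h3
      _ = (ENNReal.ofReal K) ^ (m+1) * φ.toFun u := by ring

lemma orlicz_pos (φ : OrliczFunction) {K a : ℝ} (ha : 0 < a) (hφa : 0 < φ.toFun a)
    (hq : ∀ u : ℝ, 0 ≤ u → u ≤ a → φ.toFun (2 * u) ≤ ENNReal.ofReal K * φ.toFun u)
    {t : ℝ} (ht : 0 < t) : 0 < φ.toFun t := by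
  by_contra h
  push_neg at h
  have h0 : φ.toFun t = 0 := le_antisymm h (zero_le)
  have hex : ∃ j : ℕ, a < 2 ^ j * t := by
    obtain ⟨j, hj⟩ := pow_unbounded_of_one_lt (a / t) (one_lt_two)
    exact ⟨j, by rwa [div_lt_iff₀ ht] at hj⟩
  classical
  have hj : a < 2 ^ (Nat.find hex) * t := Nat.find_spec hex
  have hbelow : ∀ i < Nat.find hex, 2 ^ i * t ≤ a :=
    fun i hi => le_of_not_gt (Nat.find_min hex hi)
  have hzero : ∀ i : ℕ, (∀ i' < i, 2 ^ i' * t ≤ a) → φ.toFun (2 ^ i * t) = 0 := by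
    intro i
    induction i with
    | zero => intro _; simpa using h0
    | succ i ih =>
      intro hb
      have h1 := hq (2 ^ i * t) (by positivity) (hb i (Nat.lt_succ_self i))
      have h2 := ih (fun i' hi' => hb i' (hi'.trans (Nat.lt_succ_self i)))
      rw [h2, mul_zero] at h1
      have he : (2:ℝ) ^ (i+1) * t = 2 * (2 ^ i * t) := by ring
      rw [he]
      exact le_antisymm h1 (zero_le)
  have hzj := hzero (Nat.find hex) hbelow
  have hle : φ.toFun a ≤ φ.toFun (2 ^ (Nat.find hex) * t) := orlicz_mono φ ha.le hj.le
  rw [hzj] at hle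
  exact hφa.ne' (le_antisymm hle (zero_le))

lemma cesaroMean_nonneg (x : ℕ → ℝ) (n : ℕ) : 0 ≤ cesaroMean x n := by
  unfold cesaroMean
  apply div_nonneg (Finset.sum_nonneg fun i _ => abs_nonneg _)
  positivity

lemma cesaroMean_smul (x : ℕ → ℝ) {lam : ℝ} (hlam : 0 ≤ lam) (n : ℕ) :
    cesaroMean (fun i => lam * x i) n = lam * cesaroMean x n := by
  unfold cesaroMean
  simp only [abs_mul, abs_of_nonneg hlam, ← Finset.mul_sum, mul_div_assoc]

/-- if `φ ∈ Δ₂(0)` then `A_φ = ces_φ`. -/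
theorem stmt_8 (φ : OrliczFunction) (htail : TailFinite φ) (hδ : Delta2Zero φ) :
    Aphi φ = cesOrlicz φ := by
  ext x
  constructor
  · exact fun h => h.1
  · intro hx
    refine ⟨hx, ?_⟩
    obtain ⟨lam, hlam, hrho⟩ := hx
    obtain ⟨K, hK, a, ha, hφa, hq⟩ := hδ
    intro k hk
    obtain ⟨m, hm⟩ := pow_unbounded_of_one_lt (k / lam) one_lt_two
    have hkm : k ≤ 2 ^ m * lam := ((div_lt_iff₀ hlam).mp hm).le
    have hεpos : 0 < 2 * a / 2 ^ m := by positivity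
    have hφε : 0 < φ.toFun (2 * a / 2 ^ m) := orlicz_pos φ ha hφa hq hεpos
    have hsummand : Tendsto (fun n => φ.toFun (cesaroMean (fun i => lam * x i) n))
        atTop (nhds 0) := ENNReal.tendsto_atTop_zero_of_tsum_ne_top hrho.ne
    have hev : ∀ᶠ n in atTop,
        φ.toFun (cesaroMean (fun i => lam * x i) n) < φ.toFun (2 * a / 2 ^ m) :=
      hsummand.eventually_lt_const hφε
    obtain ⟨N, hN⟩ := eventually_atTop.mp hev
    refine ⟨N, ?_⟩
    have hterm : ∀ n : ℕ,
        (k / ((N + n + 1 : ℕ) : ℝ)) * ∑ i ∈ Finset.range (N + n + 1), |x i|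
        = k * cesaroMean x (N + n) := by
      intro n
      unfold cesaroMean
      push_cast
      rw [div_mul_eq_mul_div, mul_div_assoc]
    have hbound : ∀ n : ℕ, φ.toFun (k * cesaroMean x (N + n)) ≤
        (ENNReal.ofReal K) ^ m * φ.toFun (lam * cesaroMean x (N + n)) := by
      intro n
      have hσ : 0 ≤ cesaroMean x (N + n) := cesaroMean_nonneg x _
      have hsmall : lam * cesaroMean x (N + n) ≤ 2 * a / 2 ^ m := by
        by_contra hcon
        push_neg at hcon
        have hmono := orlicz_mono φ hεpos.le hcon.le
        have hlt := hN (N + n) (Nat.le_add_right N n)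
        rw [cesaroMean_smul x hlam.le] at hlt
        exact absurd (hmono.trans_lt hlt) (lt_irrefl _)
      have h2 : 2 ^ m * (lam * cesaroMean x (N + n)) ≤ 2 * a := by
        rw [le_div_iff₀ (by positivity : (0:ℝ) < 2 ^ m)] at hsmall
        linarith
      calc φ.toFun (k * cesaroMean x (N + n))
          ≤ φ.toFun (2 ^ m * (lam * cesaroMean x (N + n))) := by
            apply orlicz_mono φ (by positivity)
            nlinarith
        _ ≤ (ENNReal.ofReal K) ^ m * φ.toFun (lam * cesaroMean x (N + n)) :=
            orlicz_pow_bound φ ha hq m _ (by positivity) h2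
    calc ∑' n : ℕ, φ.toFun ((k / ((N + n + 1 : ℕ) : ℝ)) * ∑ i ∈ Finset.range (N + n + 1), |x i|)
        = ∑' n : ℕ, φ.toFun (k * cesaroMean x (N + n)) := by
          exact tsum_congr fun n => by rw [hterm n]
      _ ≤ ∑' n : ℕ, (ENNReal.ofReal K) ^ m * φ.toFun (lam * cesaroMean x (N + n)) :=
          ENNReal.tsum_le_tsum hbound
      _ = (ENNReal.ofReal K) ^ m * ∑' n : ℕ, φ.toFun (lam * cesaroMean x (N + n)) :=
          ENNReal.tsum_mul_left
      _ ≤ (ENNReal.ofReal K) ^ m * ∑' n : ℕ, φ.toFun (lam * cesaroMean x n) := by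
          exact mul_le_mul_right (ENNReal.tsum_comp_le_tsum_of_injective
            (add_right_injective N) (fun n => φ.toFun (lam * cesaroMean x n))) _
      _ < ⊤ := by
          apply ENNReal.mul_lt_top (by simp [ENNReal.pow_lt_top, ENNReal.ofReal_lt_top])
          have : ∑' n : ℕ, φ.toFun (lam * cesaroMean x n)
              = rho φ (fun i => lam * x i) := by
            exact tsum_congr fun n => by rw [cesaroMean_smul x hlam.le]
          rw [this]; exact hrho
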